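/- Let m ≥ 2 be an integer, let 𝔽 be a field, and let A, B be m×m matrices over 𝔽. Then the Kronecker product A ⊗ B (an m²×m² matrix) satisfies A ⊗ B = P · (I_m ⊗ A) · Pᵀ · (I_m ⊗ B), where P = P_{(m,m²)}. In particular, since I_m ⊗ A and I_m ⊗ B lie in BD(m, m²), A ⊗ B is a Monarch matrix (an element of M(m, m²)). -/
import Mathlib


open Matrix

/-- `BD b n R`: `R` is block-diagonal with `n/b` diagonal blocks of size `b × b`. -/
def BD {𝔽 : Type*} [Field 𝔽] (b n : ℕ) (R : Matrix (Fin n) (Fin n) 𝔽) : Prop :=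
  ∀ i j : Fin n, i.val / b ≠ j.val / b → R i j = 0

/-- `DB b n L`: `L[i,j] = 0` whenever `i ≢ j (mod b)`. -/
def DB {𝔽 : Type*} [Field 𝔽] (b n : ℕ) (L : Matrix (Fin n) (Fin n) 𝔽) : Prop :=
  ∀ i j : Fin n, i.val % b ≠ j.val % b → L i j = 0

/-- The permutation matrix `P_{(b,n)}`. -/
def permMat (𝔽 : Type*) [Field 𝔽] (b n : ℕ) : Matrix (Fin n) (Fin n) 𝔽 :=
  Matrix.of fun i j => if i.val = j.val % b * (n / b) + j.val / b then 1 else 0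

/-- The Kronecker product of two `m × m` matrices, as an `m² × m²` matrix:
`(A ⊗ B)[i₁·m + i₀, j₁·m + j₀] = A[i₁,j₁] · B[i₀,j₀]`. -/
def kron {𝔽 : Type*} [Field 𝔽] (m : ℕ) (hm : 0 < m) (A B : Matrix (Fin m) (Fin m) 𝔽) :
    Matrix (Fin (m * m)) (Fin (m * m)) 𝔽 :=
  Matrix.of fun i j =>
    A ⟨i.val / m, Nat.div_lt_of_lt_mul i.isLt⟩ ⟨j.val / m, Nat.div_lt_of_lt_mul j.isLt⟩ *
    B ⟨i.val % m, Nat.mod_lt _ hm⟩ ⟨j.val % m, Nat.mod_lt _ hm⟩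

lemma kim_mod (m a b : ℕ) (ha : a < m) : (b * m + a) % m = a := by
  rw [mul_comm, Nat.mul_add_mod, Nat.mod_eq_of_lt ha]

lemma kim_div (m a b : ℕ) (hm0 : 0 < m) (ha : a < m) : (b * m + a) / m = b := by
  rw [mul_comm, Nat.mul_add_div hm0, Nat.div_eq_of_lt ha]; omega

lemma kim_lt (m a b : ℕ) (ha : a < m) (hb : b < m) : b * m + a < m * m := by
  calc b * m + a < b * m + m := by omega
  _ = (b + 1) * m := by ring
  _ ≤ m * m := Nat.mul_le_mul_right m hb

def kimSig (m : ℕ) (hm0 : 0 < m) (i : Fin (m * m)) : Fin (m * m) :=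
  ⟨i.val % m * m + i.val / m,
    kim_lt m _ _ (Nat.div_lt_of_lt_mul i.isLt) (Nat.mod_lt _ hm0)⟩

lemma kimSig_mod (m : ℕ) (hm0 : 0 < m) (i : Fin (m * m)) :
    (kimSig m hm0 i).val % m = i.val / m :=
  kim_mod m _ _ (Nat.div_lt_of_lt_mul i.isLt)

lemma kimSig_div (m : ℕ) (hm0 : 0 < m) (i : Fin (m * m)) :
    (kimSig m hm0 i).val / m = i.val % m :=
  kim_div m _ _ hm0 (Nat.div_lt_of_lt_mul i.isLt)

lemma kim_self (m x : ℕ) : x / m * m + x % m = x := Nat.div_add_mod' x m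

lemma kim_cond_iff (m : ℕ) (hm0 : 0 < m) (i j : Fin (m * m)) :
    i.val = j.val % m * m + j.val / m ↔ j = kimSig m hm0 i := by
  constructor
  · intro h
    have hjd : j.val / m < m := Nat.div_lt_of_lt_mul j.isLt
    have him : i.val % m = j.val / m := by rw [h, kim_mod m _ _ hjd]
    have hid : i.val / m = j.val % m := by rw [h, kim_div m _ _ hm0 hjd]
    apply Fin.ext
    show j.val = i.val % m * m + i.val / m
    rw [him, hid, kim_self]
  · rintro rfl
    rw [kimSig_mod, kimSig_div, kim_self]

lemma permMat_apply (𝔽 : Type*) [Field 𝔽] (m : ℕ) (hm0 : 0 < m) (i j : Fin (m * m)) :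
    permMat 𝔽 m (m * m) i j = if j = kimSig m hm0 i then 1 else 0 := by
  simp only [permMat, Matrix.of_apply, Nat.mul_div_cancel _ hm0]
  simp [kim_cond_iff m hm0 i j]

lemma Pmul_apply {𝔽 : Type*} [Field 𝔽] (m : ℕ) (hm0 : 0 < m)
    (X : Matrix (Fin (m * m)) (Fin (m * m)) 𝔽) (i j : Fin (m * m)) :
    (permMat 𝔽 m (m * m) * X) i j = X (kimSig m hm0 i) j := by
  rw [Matrix.mul_apply]
  rw [Fintype.sum_eq_single (kimSig m hm0 i) (fun k hk => by
    rw [permMat_apply 𝔽 m hm0, if_neg hk, zero_mul])]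
  rw [permMat_apply 𝔽 m hm0, if_pos rfl, one_mul]

lemma mulPT_apply {𝔽 : Type*} [Field 𝔽] (m : ℕ) (hm0 : 0 < m)
    (X : Matrix (Fin (m * m)) (Fin (m * m)) 𝔽) (i j : Fin (m * m)) :
    (X * (permMat 𝔽 m (m * m))ᵀ) i j = X i (kimSig m hm0 j) := by
  rw [Matrix.mul_apply]
  rw [Fintype.sum_eq_single (kimSig m hm0 j) (fun k hk => by
    rw [Matrix.transpose_apply, permMat_apply 𝔽 m hm0, if_neg hk, mul_zero])]
  rw [Matrix.transpose_apply, permMat_apply 𝔽 m hm0, if_pos rfl, mul_one]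

lemma kron_one_apply {𝔽 : Type*} [Field 𝔽] (m : ℕ) (hm0 : 0 < m)
    (C : Matrix (Fin m) (Fin m) 𝔽) (i j : Fin (m * m)) :
    kron m hm0 1 C i j =
      (if i.val / m = j.val / m then 1 else 0) *
        C ⟨i.val % m, Nat.mod_lt _ hm0⟩ ⟨j.val % m, Nat.mod_lt _ hm0⟩ := by
  simp [kron, Matrix.one_apply, Fin.mk.injEq]

lemma kron_one_bd {𝔽 : Type*} [Field 𝔽] (m : ℕ) (hm0 : 0 < m)
    (C : Matrix (Fin m) (Fin m) 𝔽) : BD m (m * m) (kron m hm0 1 C) := by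
  intro i j hij
  rw [kron_one_apply m hm0, if_neg hij, zero_mul]

/-- `A ⊗ B = P (I ⊗ A) Pᵀ (I ⊗ B)` with `P = P_{(m, m²)}`; in particular
`I ⊗ A, I ⊗ B ∈ BD(m, m²)` and `A ⊗ B` is a Monarch matrix (in `M(m, m²)`). -/
theorem kronecker_is_monarch {𝔽 : Type*} [Field 𝔽] (m : ℕ) (hm : 2 ≤ m)
    (A B : Matrix (Fin m) (Fin m) 𝔽) :
    kron m (by omega) A B =
      permMat 𝔽 m (m * m) * kron m (by omega) 1 A * (permMat 𝔽 m (m * m))ᵀ *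
        kron m (by omega) 1 B ∧
    BD m (m * m) (kron m (by omega) 1 A) ∧
    BD m (m * m) (kron m (by omega) 1 B) ∧
    ∃ L R : Matrix (Fin (m * m)) (Fin (m * m)) 𝔽,
      DB m (m * m) L ∧ BD m (m * m) R ∧ kron m (by omega) A B = L * R := by
  have hm0 : 0 < m := by omega
  have hL : ∀ i j : Fin (m * m),
      (permMat 𝔽 m (m * m) * kron m hm0 1 A * (permMat 𝔽 m (m * m))ᵀ) i j =
      (if i.val % m = j.val % m then (1 : 𝔽) else 0) *
        A ⟨i.val / m, Nat.div_lt_of_lt_mul i.isLt⟩ ⟨j.val / m, Nat.div_lt_of_lt_mul j.isLt⟩ := by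
    intro i j
    rw [mulPT_apply m hm0, Pmul_apply m hm0, kron_one_apply m hm0]
    simp only [kimSig_mod, kimSig_div]
  have hEq : kron m hm0 A B =
      permMat 𝔽 m (m * m) * kron m hm0 1 A * (permMat 𝔽 m (m * m))ᵀ * kron m hm0 1 B := by
    ext i j
    rw [Matrix.mul_apply]
    have hi : i.val % m < m := Nat.mod_lt _ hm0
    have hj : j.val / m < m := Nat.div_lt_of_lt_mul j.isLt
    set k0 : Fin (m * m) := ⟨j.val / m * m + i.val % m, kim_lt m _ _ hi hj⟩ with hk0
    have hk0m : k0.val % m = i.val % m := kim_mod m _ _ hi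
    have hk0d : k0.val / m = j.val / m := kim_div m _ _ hm0 hi
    have hZ : ∀ k : Fin (m * m), k ≠ k0 →
        (permMat 𝔽 m (m * m) * kron m hm0 1 A * (permMat 𝔽 m (m * m))ᵀ) i k *
          kron m hm0 1 B k j = 0 := by
      intro k hk
      rw [hL, kron_one_apply m hm0]
      by_cases h1 : i.val % m = k.val % m
      · by_cases h2 : k.val / m = j.val / m
        · exfalso
          apply hk
          apply Fin.ext
          show k.val = j.val / m * m + i.val % m
          rw [← h2, h1, kim_self]
        · rw [if_neg h2, zero_mul, mul_zero]
      · rw [if_neg h1, zero_mul, zero_mul]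
    rw [Fintype.sum_eq_single k0 hZ]
    rw [hL, kron_one_apply m hm0]
    simp only [hk0m, hk0d, if_true, one_mul]
    rfl
  have hDB : DB m (m * m) (permMat 𝔽 m (m * m) * kron m hm0 1 A * (permMat 𝔽 m (m * m))ᵀ) := by
    intro i j hij
    rw [hL, if_neg hij, zero_mul]
  exact ⟨hEq, kron_one_bd m hm0 A, kron_one_bd m hm0 B,
    permMat 𝔽 m (m * m) * kron m hm0 1 A * (permMat 𝔽 m (m * m))ᵀ, kron m hm0 1 B,
    hDB, kron_one_bd m hm0 B, hEq⟩
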